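/- Let K̂_n (n ≥ 4) be the complete graph K_n with one edge subdivided. Then the sum index of K̂_n equals 2n − 4. -/

import Mathlib

open SimpleGraph

/-- `K̂ n`: the complete graph on `Fin n` with the edge between vertices `0` and `1`
subdivided by the new vertex `Sum.inr ()`. -/
def hatK (n : ℕ) : SimpleGraph (Fin n ⊕ Unit) :=
  SimpleGraph.fromRel (fun a b =>
    match a, b with
    | Sum.inl i, Sum.inl j => ¬(((i : ℕ) = 0 ∧ (j : ℕ) = 1) ∨ ((i : ℕ) = 1 ∧ (j : ℕ) = 0))
    | Sum.inl i, Sum.inr _ => (i : ℕ) = 0 ∨ (i : ℕ) = 1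
    | Sum.inr _, Sum.inl j => (j : ℕ) = 0 ∨ (j : ℕ) = 1
    | Sum.inr _, Sum.inr _ => False)

/-- The sum index of a finite simple graph. -/
noncomputable def sumIndex {V : Type*} [Fintype V] (G : SimpleGraph V) : ℕ :=
  sInf {n | ∃ f : V → ℤ, Function.Injective f ∧
    {s : ℤ | ∃ u v, G.Adj u v ∧ s = f u + f v}.ncard = n}

lemma hatK_adj_inl_inl {n : ℕ} (i j : Fin n) :
    (hatK n).Adj (Sum.inl i) (Sum.inl j) ↔
      i ≠ j ∧ ¬(((i : ℕ) = 0 ∧ (j : ℕ) = 1) ∨ ((i : ℕ) = 1 ∧ (j : ℕ) = 0)) := by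
  rw [hatK, SimpleGraph.fromRel_adj]
  constructor
  · rintro ⟨hne, h | h⟩
    · exact ⟨fun e => hne (by rw [e]), h⟩
    · exact ⟨fun e => hne (by rw [e]), fun hc => h (by tauto)⟩
  · rintro ⟨hne, h⟩
    exact ⟨fun e => hne (Sum.inl.inj e), Or.inl h⟩

lemma hatK_adj_inl_inr {n : ℕ} (i : Fin n) :
    (hatK n).Adj (Sum.inl i) (Sum.inr ()) ↔ ((i : ℕ) = 0 ∨ (i : ℕ) = 1) := by
  rw [hatK, SimpleGraph.fromRel_adj]
  simp

/-- indices of the `k`-th pair in the chain of sums -/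
def chainPair (n : ℕ) (hn : 4 ≤ n) (k : Fin (2 * n - 3)) : Fin n × Fin n :=
  if h : (k : ℕ) < n - 1 then (⟨0, by omega⟩, ⟨(k : ℕ) + 1, by omega⟩)
  else (⟨(k : ℕ) - (n - 2), by have := k.isLt; omega⟩, ⟨n - 1, by omega⟩)

lemma chainPair_fst_lt_snd (n : ℕ) (hn : 4 ≤ n) (k : Fin (2 * n - 3)) :
    (chainPair n hn k).1 < (chainPair n hn k).2 := by
  have := k.isLt
  rw [chainPair]
  split_ifs with h <;> simp [Fin.lt_def] <;> omega

lemma chainPair_injective (n : ℕ) (hn : 4 ≤ n) : Function.Injective (chainPair n hn) := by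
  intro k1 k2 h
  have h1 := k1.isLt
  have h2 := k2.isLt
  rw [chainPair, chainPair] at h
  apply Fin.ext
  split_ifs at h with hc1 hc2 hc2 <;>
    simp only [Prod.mk.injEq, Fin.mk.injEq] at h <;> omega

lemma chain_strictMono (n : ℕ) (hn : 4 ≤ n) (g : Fin n → ℤ) (hg : StrictMono g) :
    StrictMono (fun k => g (chainPair n hn k).1 + g (chainPair n hn k).2) := by
  intro k1 k2 hlt
  have h1 := k1.isLt
  have h2 := k2.isLt
  have hlt' : (k1 : ℕ) < (k2 : ℕ) := hlt
  simp only [chainPair]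
  split_ifs with hc1 hc2 hc2
  · exact add_lt_add_right (hg (Fin.mk_lt_mk.mpr (by omega))) _
  · exact add_lt_add_of_lt_of_le (hg (Fin.mk_lt_mk.mpr (by omega)))
      (hg.monotone (Fin.mk_le_mk.mpr (by omega)))
  · omega
  · exact add_lt_add_left (hg (Fin.mk_lt_mk.mpr (by omega))) _

/-- the explicit labelling giving the upper bound -/
def upLabel (n : ℕ) : Fin n ⊕ Unit → ℤ := Sum.elim (fun i => (i : ℤ)) (fun _ => (n : ℤ))

lemma upLabel_injective (n : ℕ) : Function.Injective (upLabel n) := by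
  rintro (i | ⟨⟩) (j | ⟨⟩) h <;> simp only [upLabel, Sum.elim_inl, Sum.elim_inr] at h
  · exact congrArg Sum.inl (Fin.ext (by exact_mod_cast h))
  · have := i.isLt; omega
  · have := j.isLt; omega
  · rfl

lemma upLabel_sumset (n : ℕ) (hn : 4 ≤ n) :
    {s : ℤ | ∃ u v, (hatK n).Adj u v ∧ s = upLabel n u + upLabel n v} =
      Set.Icc 2 (2 * (n : ℤ) - 3) := by
  ext s
  simp only [Set.mem_setOf_eq, Set.mem_Icc]
  constructor
  · rintro ⟨u, v, hadj, rfl⟩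
    rcases u with i | ⟨⟩ <;> rcases v with j | ⟨⟩ <;>
      simp only [upLabel, Sum.elim_inl, Sum.elim_inr]
    · rw [hatK_adj_inl_inl] at hadj
      obtain ⟨hne, hp⟩ := hadj
      have hne' : (i : ℕ) ≠ (j : ℕ) := fun e => hne (Fin.ext e)
      have := i.isLt; have := j.isLt
      omega
    · rw [hatK_adj_inl_inr] at hadj
      omega
    · rw [(hatK n).adj_comm, hatK_adj_inl_inr] at hadj
      omega
    · exact absurd rfl hadj.ne
  · rintro ⟨hs1, hs2⟩
    by_cases h : s ≤ (n : ℤ) - 1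
    · refine ⟨Sum.inl ⟨0, by omega⟩, Sum.inl ⟨s.toNat, by omega⟩, ?_, ?_⟩
      · rw [hatK_adj_inl_inl]
        constructor
        · intro e
          have := congrArg Fin.val e
          simp only at this
          omega
        · simp only
          omega
      · simp only [upLabel, Sum.elim_inl]
        omega
    · refine ⟨Sum.inl ⟨s.toNat - (n - 1), by omega⟩, Sum.inl ⟨n - 1, by omega⟩, ?_, ?_⟩
      · rw [hatK_adj_inl_inl]
        constructor
        · intro e
          have := congrArg Fin.val e
          simp only at this
          omega
        · simp only
          omega
      · simp only [upLabel, Sum.elim_inl]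
        omega

lemma upLabel_ncard (n : ℕ) (hn : 4 ≤ n) :
    {s : ℤ | ∃ u v, (hatK n).Adj u v ∧ s = upLabel n u + upLabel n v}.ncard = 2 * n - 4 := by
  rw [upLabel_sumset n hn, ← Finset.coe_Icc, Set.ncard_coe_finset, Int.card_Icc]
  omega

lemma sum_index_lower (n : ℕ) (hn : 4 ≤ n) (f : Fin n ⊕ Unit → ℤ)
    (hf : Function.Injective f) :
    2 * n - 4 ≤ {s : ℤ | ∃ u v, (hatK n).Adj u v ∧ s = f u + f v}.ncard := by
  set S := {s : ℤ | ∃ u v, (hatK n).Adj u v ∧ s = f u + f v} with hS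
  have hSfin : S.Finite := by
    apply Set.Finite.subset
      (Set.finite_range (fun p : (Fin n ⊕ Unit) × (Fin n ⊕ Unit) => f p.1 + f p.2))
    rintro s ⟨u, v, _, rfl⟩
    exact ⟨(u, v), rfl⟩
  set a : Fin n → ℤ := fun i => f (Sum.inl i) with ha_def
  have ha : Function.Injective a := fun i j h => Sum.inl.inj (hf h)
  set σ := Tuple.sort a with hσ
  set g : Fin n → ℤ := a ∘ σ with hg_def
  have hg : StrictMono g := (Tuple.monotone_sort a).strictMono_of_injective (ha.comp σ.injective)
  set c : Fin (2 * n - 3) → ℤ :=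
    fun k => g (chainPair n hn k).1 + g (chainPair n hn k).2 with hc_def
  have hc : StrictMono c := chain_strictMono n hn g hg
  set B : Set (Fin (2 * n - 3)) :=
    {k | ¬ (hatK n).Adj (Sum.inl (σ (chainPair n hn k).1)) (Sum.inl (σ (chainPair n hn k).2))}
    with hB
  have hmem : ∀ k, k ∉ B → c k ∈ S := by
    intro k hk
    exact ⟨Sum.inl (σ (chainPair n hn k).1), Sum.inl (σ (chainPair n hn k).2),
      not_not.mp hk, rfl⟩
  have hbad : ∀ k ∈ B,
      (((σ (chainPair n hn k).1 : Fin n) : ℕ) = 0 ∧ ((σ (chainPair n hn k).2 : Fin n) : ℕ) = 1) ∨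
      (((σ (chainPair n hn k).1 : Fin n) : ℕ) = 1 ∧ ((σ (chainPair n hn k).2 : Fin n) : ℕ) = 0) := by
    intro k hk
    have hlt := chainPair_fst_lt_snd n hn k
    have hne : σ (chainPair n hn k).1 ≠ σ (chainPair n hn k).2 :=
      fun e => absurd (σ.injective e) (ne_of_lt hlt)
    rw [hB, Set.mem_setOf_eq, hatK_adj_inl_inl] at hk
    push_neg at hk
    exact hk hne
  have hBsub : ∀ k1 ∈ B, ∀ k2 ∈ B, k1 = k2 := by
    intro k1 hk1 k2 hk2
    have hlt1 := chainPair_fst_lt_snd n hn k1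
    have hlt2 := chainPair_fst_lt_snd n hn k2
    have h1 := hbad k1 hk1
    have h2 := hbad k2 hk2
    have key : chainPair n hn k1 = chainPair n hn k2 := by
      have einj : ∀ x y : Fin n, ((σ x : Fin n) : ℕ) = ((σ y : Fin n) : ℕ) → x = y :=
        fun x y h => σ.injective (Fin.ext h)
      rcases h1 with ⟨e1, e2⟩ | ⟨e1, e2⟩ <;> rcases h2 with ⟨e3, e4⟩ | ⟨e3, e4⟩
      · exact Prod.ext (einj _ _ (e1.trans e3.symm)) (einj _ _ (e2.trans e4.symm))
      · have q1 : (chainPair n hn k1).1 = (chainPair n hn k2).2 := einj _ _ (e1.trans e4.symm)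
        have q2 : (chainPair n hn k1).2 = (chainPair n hn k2).1 := einj _ _ (e2.trans e3.symm)
        rw [q1] at hlt1
        rw [← q2] at hlt2
        exact absurd (hlt1.trans hlt2) (lt_irrefl _)
      · have q1 : (chainPair n hn k1).1 = (chainPair n hn k2).2 := einj _ _ (e1.trans e4.symm)
        have q2 : (chainPair n hn k1).2 = (chainPair n hn k2).1 := einj _ _ (e2.trans e3.symm)
        rw [q1] at hlt1
        rw [← q2] at hlt2
        exact absurd (hlt1.trans hlt2) (lt_irrefl _)
      · exact Prod.ext (einj _ _ (e1.trans e3.symm)) (einj _ _ (e2.trans e4.symm))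
    exact chainPair_injective n hn key
  obtain ⟨k0, hk0⟩ : ∃ k0 : Fin (2 * n - 3), B ⊆ {k0} := by
    rcases Set.eq_empty_or_nonempty B with h | ⟨b, hb⟩
    · exact ⟨⟨0, by omega⟩, by rw [h]; exact Set.empty_subset _⟩
    · exact ⟨b, fun x hx => hBsub x hx b hb⟩
  have hsub : c '' ({k0}ᶜ) ⊆ S := by
    rintro s ⟨k, hk, rfl⟩
    exact hmem k (fun hkB => hk (hk0 hkB))
  calc 2 * n - 4 = ({k0}ᶜ : Set (Fin (2 * n - 3))).ncard := by
        rw [Set.compl_eq_univ_diff, Set.ncard_diff_singleton_of_mem (Set.mem_univ k0),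
          Set.ncard_univ, Nat.card_eq_fintype_card, Fintype.card_fin]
        omega
    _ = (c '' ({k0}ᶜ)).ncard := (Set.ncard_image_of_injective _ hc.injective).symm
    _ ≤ S.ncard := Set.ncard_le_ncard hsub hSfin

/-- For `n ≥ 4`, the sum index of `K̂_n` equals `2n - 4`. -/
theorem stmt10 (n : ℕ) (hn : 4 ≤ n) : sumIndex (hatK n) = 2 * n - 4 := by
  have hmem : (2 * n - 4) ∈ {m | ∃ f : Fin n ⊕ Unit → ℤ, Function.Injective f ∧
      {s : ℤ | ∃ u v, (hatK n).Adj u v ∧ s = f u + f v}.ncard = m} :=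
    ⟨upLabel n, upLabel_injective n, upLabel_ncard n hn⟩
  apply le_antisymm
  · exact Nat.sInf_le hmem
  · apply le_csInf ⟨_, hmem⟩
    rintro m ⟨f, hf, rfl⟩
    exact sum_index_lower n hn f hf
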